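/- Every thin (κ,λ)-list is κ-slender (and hence μ-slender for every uncountable μ ≤ κ). -/

import Mathlib

universe u

/-- `C` is a closed unbounded subset of `P_κ(B)`, the subsets of `B` of size `< κ`:
every member of `C` is a subset of `B` of size `< κ`, `C` is cofinal (unbounded) in
`(P_κ(B), ⊆)`, and `C` is closed under unions of nonempty `⊆`-chains of length `< κ`. -/
def IsClubIn {β : Type u} (κ : Cardinal.{u}) (B : Set β) (C : Set (Set β)) : Prop :=
  (∀ A ∈ C, A ⊆ B ∧ Cardinal.mk ↥A < κ) ∧
  (∀ A : Set β, A ⊆ B → Cardinal.mk ↥A < κ → ∃ D ∈ C, A ⊆ D) ∧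
  (∀ D : Set (Set β), D ⊆ C → D.Nonempty → IsChain (· ⊆ ·) D →
    Cardinal.mk ↥D < κ → ⋃₀ D ∈ C)

/-- A `(κ,λ)`-list `⟨d x : x ∈ P_κ(λ)⟩` (given by a function `d` on subsets of `λ`,
with `d x ⊆ x` for `x ∈ P_κ(λ)`) is *thin* if on a club of `y ∈ P_κ(λ)` the set
`{ d x ∩ y : y ⊆ x }` has size `< κ`. -/
def IsThinList (κ : Cardinal.{u}) (lam : Ordinal.{u})
    (d : Set lam.ToType → Set lam.ToType) : Prop :=
  ∃ C : Set (Set lam.ToType), IsClubIn κ Set.univ C ∧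
    ∀ y ∈ C, Cardinal.mk ↥{s : Set lam.ToType |
      ∃ x : Set lam.ToType, Cardinal.mk ↥x < κ ∧ y ⊆ x ∧ s = d x ∩ y} < κ

/-- A `(κ,λ)`-list is *`μ`-slender* if (for all sufficiently large `θ`) there is a club of
models `M ∈ P_κ(H(θ))` such that for all `y ∈ M ∩ P_μ(λ)` we have `d (M ∩ λ) ∩ y ∈ M`.
Here the relevant part of `H(θ)` is modelled by `λ ⊕ P(λ)`, so that a model `M` is a small
set of ordinals `< λ` (left summands) and subsets of `λ` (right summands); `M ∩ λ` is the
set of left summands of `M`, and membership `∈ M` is membership of the right summands. -/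
def IsSlenderList (μ κ : Cardinal.{u}) (lam : Ordinal.{u})
    (d : Set lam.ToType → Set lam.ToType) : Prop :=
  ∃ C : Set (Set (lam.ToType ⊕ Set lam.ToType)), IsClubIn κ Set.univ C ∧
    ∀ M ∈ C, ∀ y : Set lam.ToType, Sum.inr y ∈ M → Cardinal.mk ↥y < μ →
      Sum.inr (d {o : lam.ToType | Sum.inl o ∈ M} ∩ y) ∈ M

/-- Every thin `(κ,λ)`-list is `κ`-slender, and hence `μ`-slender for
every uncountable `μ ≤ κ`. -/
theorem thin_implies_slender (κ : Cardinal.{u}) (hreg : κ.IsRegular)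
    (hunc : Cardinal.aleph0 < κ) (lam : Ordinal.{u}) (hkl : κ.ord ≤ lam)
    (d : Set lam.ToType → Set lam.ToType) (hd : ∀ x : Set lam.ToType, d x ⊆ x)
    (hthin : IsThinList κ lam d) :
    IsSlenderList κ κ lam d ∧
      ∀ μ : Cardinal.{u}, Cardinal.aleph0 < μ → μ ≤ κ → IsSlenderList μ κ lam d := by
  classical
  obtain ⟨C, ⟨hCmem, hCunb, _⟩, hthinC⟩ := hthin
  have hκ0 : Cardinal.aleph0 ≤ κ := hreg.aleph0_le
  let α := lam.ToType
  -- closure function f, picking a club member above y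
  let f : Set α → Set α := fun y =>
    if h : Cardinal.mk ↥y < κ then (hCunb y (Set.subset_univ _) h).choose else ∅
  have hfC : ∀ y : Set α, Cardinal.mk ↥y < κ → f y ∈ C := by
    intro y h
    simp only [f, dif_pos h]
    exact (hCunb y (Set.subset_univ _) h).choose_spec.1
  have hfsub : ∀ y : Set α, Cardinal.mk ↥y < κ → y ⊆ f y := by
    intro y h
    simp only [f, dif_pos h]
    exact (hCunb y (Set.subset_univ _) h).choose_spec.2
  let T : Set α → Set (Set α) := fun z =>
    {s | ∃ x : Set α, Cardinal.mk ↥x < κ ∧ z ⊆ x ∧ s = d x ∩ z}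
  let g : Set α → Set (α ⊕ Set α) := fun y =>
    (Sum.inl '' f y) ∪ (Sum.inr '' ((· ∩ y) '' T (f y)))
  have hgcard : ∀ y : Set α, Cardinal.mk ↥y < κ → Cardinal.mk ↥(g y) < κ := by
    intro y h
    refine lt_of_le_of_lt (Cardinal.mk_union_le _ _) (Cardinal.add_lt_of_lt hκ0 ?_ ?_)
    · exact lt_of_le_of_lt (Cardinal.mk_image_le) ((hCmem _ (hfC y h)).2)
    · exact lt_of_le_of_lt (Cardinal.mk_image_le.trans Cardinal.mk_image_le)
        (hthinC _ (hfC y h))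
  -- the club of slender models
  let C' : Set (Set (α ⊕ Set α)) :=
    {M | Cardinal.mk ↥M < κ ∧
      ∀ y : Set α, Sum.inr y ∈ M → Cardinal.mk ↥y < κ → g y ⊆ M}
  have slender : ∀ M ∈ C', ∀ y : Set α, Sum.inr y ∈ M → Cardinal.mk ↥y < κ →
      Sum.inr (d {o : α | Sum.inl o ∈ M} ∩ y) ∈ M := by
    intro M hM y hy hyκ
    set x : Set α := {o : α | Sum.inl o ∈ M} with hx
    have hgM : g y ⊆ M := hM.2 y hy hyκ
    have hxcard : Cardinal.mk ↥x < κ := by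
      refine lt_of_le_of_lt (Cardinal.mk_le_of_injective
        (f := fun o : x => (⟨Sum.inl o.1, o.2⟩ : M)) ?_) hM.1
      intro a b hab
      simpa [Subtype.ext_iff] using hab
    have hfx : f y ⊆ x := by
      intro o ho
      exact hgM (Or.inl ⟨o, ho, rfl⟩)
    have hmem : d x ∩ f y ∈ T (f y) := ⟨x, hxcard, hfx, rfl⟩
    have : Sum.inr ((d x ∩ f y) ∩ y) ∈ M :=
      hgM (Or.inr ⟨(d x ∩ f y) ∩ y, ⟨d x ∩ f y, hmem, rfl⟩, rfl⟩)
    have heq : (d x ∩ f y) ∩ y = d x ∩ y := by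
      ext o
      constructor
      · rintro ⟨⟨h1, _⟩, h3⟩; exact ⟨h1, h3⟩
      · rintro ⟨h1, h3⟩; exact ⟨⟨h1, hfsub y hyκ h3⟩, h3⟩
    rwa [heq] at this
  have club : IsClubIn κ (Set.univ : Set (α ⊕ Set α)) C' := by
    refine ⟨fun A hA => ⟨Set.subset_univ _, hA.1⟩, ?_, ?_⟩
    · -- unboundedness
      intro A _ hA
      let F : ℕ → Set (α ⊕ Set α) := fun n =>
        Nat.rec A (fun _ Mn => Mn ∪ ⋃ y ∈ {y : Set α | Sum.inr y ∈ Mn ∧ Cardinal.mk ↥y < κ}, g y) n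
      have hFmono : ∀ n, F n ⊆ F (n + 1) := fun n => Set.subset_union_left
      have hFcard : ∀ n, Cardinal.mk ↥(F n) < κ := by
        intro n
        induction n with
        | zero => exact hA
        | succ n ih =>
          show Cardinal.mk ↥(F n ∪ _) < κ
          refine lt_of_le_of_lt (Cardinal.mk_union_le _ _) (Cardinal.add_lt_of_lt hκ0 ih ?_)
          rw [Cardinal.card_biUnion_lt_iff_forall_of_isRegular hreg ?_]
          · rintro y ⟨_, hyκ⟩
            exact hgcard y hyκ
          · refine lt_of_le_of_lt (Cardinal.mk_le_of_injective
              (f := fun y : {y : Set α | Sum.inr y ∈ F n ∧ Cardinal.mk ↥y < κ} =>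
                (⟨Sum.inr y.1, y.2.1⟩ : F n)) ?_) ih
            intro a b hab
            simpa [Subtype.ext_iff] using hab
      refine ⟨⋃ n : ULift.{u} ℕ, F n.down, ⟨?_, ?_⟩,
        Set.subset_iUnion (fun n : ULift.{u} ℕ => F n.down) ⟨0⟩⟩
      · rw [Cardinal.card_iUnion_lt_iff_forall_of_isRegular hreg (by simpa using hunc)]
        exact fun n => hFcard n.down
      · intro y hy hyκ
        obtain ⟨⟨n⟩, hn⟩ : ∃ n : ULift.{u} ℕ, Sum.inr y ∈ F n.down := by
          simpa using hy
        refine Set.Subset.trans ?_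
          (Set.subset_iUnion (fun n : ULift.{u} ℕ => F n.down) ⟨n + 1⟩)
        refine Set.Subset.trans ?_ Set.subset_union_right
        exact Set.subset_biUnion_of_mem (u := g) ⟨hn, hyκ⟩
    · -- chain closure
      intro D hD hDne _ hDcard
      constructor
      · rw [Set.sUnion_eq_iUnion, Cardinal.card_iUnion_lt_iff_forall_of_isRegular hreg hDcard]
        exact fun A => (hD A.2).1
      · rintro y ⟨B, hB, hyB⟩ hyκ
        exact Set.Subset.trans ((hD hB).2 y hyB hyκ) (Set.subset_sUnion_of_mem hB)
  exact ⟨⟨C', club, slender⟩, fun μ _ hμκ =>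
    ⟨C', club, fun M hM y hy hyμ => slender M hM y hy (hyμ.trans_le hμκ)⟩⟩
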